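/- arXiv:2004.08551 — 3 statements merged into one kernel-verified Lean document; each statement's English description precedes it below -/
import Mathlib

section
/- Let A be a unital ring and n ≥ 2. The homomorphism st : St(n, A) → GL(n, A) restricts to an isomorphism of the subgroup U⁺ = ⟨x_{ij}(a) : i < j⟩ of the Steinberg group onto the group of upper unitriangular matrices in GL(n, A). -/
/-- Generators of the Steinberg group: triples `(i, j, a)` with `i ≠ j` and `a ∈ A`. -/
def SteinbergGen (n : ℕ) (A : Type*) : Type _ :=
  {p : Fin n × Fin n // p.1 ≠ p.2} × A

/-- The free-group generator corresponding to `x_{ij}(a)`. -/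
def xgen {n : ℕ} {A : Type*} (i j : Fin n) (hij : i ≠ j) (a : A) :
    FreeGroup (SteinbergGen n A) :=
  FreeGroup.of (⟨(i, j), hij⟩, a)

open scoped commutatorElement

/-- The Steinberg relations, as elements of the free group that are set to `1`. -/
def SteinbergRels (n : ℕ) (A : Type*) [Ring A] : Set (FreeGroup (SteinbergGen n A)) :=
  {r | (∃ (i j : Fin n) (hij : i ≠ j) (a b : A),
          r = xgen i j hij a * xgen i j hij b * (xgen i j hij (a + b))⁻¹) ∨
       (∃ (i j k l : Fin n) (hij : i ≠ j) (hkl : k ≠ l) (_ : j ≠ k) (_ : i ≠ l) (a b : A),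
          r = ⁅xgen i j hij a, xgen k l hkl b⁆) ∨
       (∃ (i j k : Fin n) (hij : i ≠ j) (hjk : j ≠ k) (hik : i ≠ k) (a b : A),
          r = ⁅xgen i j hij a, xgen j k hjk b⁆ * (xgen i k hik (a * b))⁻¹)}

/-- The Steinberg group `St(n, A)`, presented by the generators `x_{ij}(a)` subject to the
Steinberg relations. -/
def Steinberg (n : ℕ) (A : Type*) [Ring A] : Type _ :=
  PresentedGroup (SteinbergRels n A)

instance (n : ℕ) (A : Type*) [Ring A] : Group (Steinberg n A) :=
  inferInstanceAs (Group (PresentedGroup (SteinbergRels n A)))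

/-- The generator `x_{ij}(a)` of the Steinberg group. -/
def st_x {n : ℕ} {A : Type*} [Ring A] (i j : Fin n) (hij : i ≠ j) (a : A) :
    Steinberg n A :=
  PresentedGroup.of (⟨(i, j), hij⟩, a)

set_option maxHeartbeats 1000000

open Matrix

/-- The elementary transvection `t_{ij}(a) = 1 + a·E_{ij}` (for `i ≠ j`) as an invertible
`n × n` matrix, with inverse `t_{ij}(-a)`. -/
def transvection' {n : ℕ} {A : Type*} [Ring A] (i j : Fin n) (hij : i ≠ j) (a : A) :
    (Matrix (Fin n) (Fin n) A)ˣ where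
  val := 1 + single i j a
  inv := 1 + single i j (-a)
  val_inv := by
    simp only [Matrix.mul_add, Matrix.add_mul, Matrix.one_mul, Matrix.mul_one,
      single_mul_single_of_ne _ _ _ _ (Ne.symm hij)]
    simp only [add_zero]; rw [add_assoc, ← single_add]
    simp
  inv_val := by
    simp only [Matrix.mul_add, Matrix.add_mul, Matrix.one_mul, Matrix.mul_one,
      single_mul_single_of_ne _ _ _ _ (Ne.symm hij)]
    simp only [add_zero]; rw [add_assoc, ← single_add]
    simp

/-- The subgroup `U⁺` of the Steinberg group generated by the `x_{ij}(a)` with `i < j`. -/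
def Uplus (n : ℕ) (A : Type*) [Ring A] : Subgroup (Steinberg n A) :=
  Subgroup.closure {g | ∃ (i j : Fin n) (hij : i < j) (a : A), g = st_x i j hij.ne a}

/-- The set of upper unitriangular invertible matrices. -/
def UnitriSet (n : ℕ) (A : Type*) [Ring A] : Set ((Matrix (Fin n) (Fin n) A)ˣ) :=
  {u | (∀ i : Fin n, u.val i i = 1) ∧
       ∀ i j : Fin n, j < i → u.val i j = 0}

section Helpers
open Matrix
variable {n : ℕ} {A : Type*} [Ring A]

lemma st_rel_one {r : FreeGroup (SteinbergGen n A)} (hr : r ∈ SteinbergRels n A) :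
    (PresentedGroup.mk (SteinbergRels n A) r : Steinberg n A) = 1 :=
  (QuotientGroup.eq_one_iff _).mpr (Subgroup.subset_normalClosure hr)

lemma st_mk_xgen (i j : Fin n) (hij : i ≠ j) (a : A) :
    (PresentedGroup.mk (SteinbergRels n A) (xgen i j hij a) : Steinberg n A)
      = st_x i j hij a := rfl

lemma stx_add (i j : Fin n) (hij : i ≠ j) (a b : A) :
    st_x i j hij a * st_x i j hij b = st_x i j hij (a + b) := by
  have h := st_rel_one (n := n) (A := A) (Or.inl ⟨i, j, hij, a, b, rfl⟩)
  rw [_root_.map_mul, _root_.map_mul, map_inv, st_mk_xgen, st_mk_xgen, st_mk_xgen,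
    ] at h
  exact mul_inv_eq_one.mp h

lemma stx_zero (i j : Fin n) (hij : i ≠ j) : st_x i j hij (0 : A) = 1 := by
  have h := stx_add i j hij (0 : A) 0
  rw [add_zero] at h
  have h2 : st_x i j hij (0 : A) * st_x i j hij 0 = st_x i j hij 0 * 1 := by
    rw [h, mul_one]
  exact mul_left_cancel h2

lemma stx_inv (i j : Fin n) (hij : i ≠ j) (a : A) :
    (st_x i j hij a)⁻¹ = st_x i j hij (-a) := by
  have h : st_x i j hij (-a) * st_x i j hij a = 1 := by
    rw [stx_add, neg_add_cancel, stx_zero]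
  exact (eq_inv_of_mul_eq_one_left h).symm

lemma stx_comm (i j k l : Fin n) (hij : i ≠ j) (hkl : k ≠ l) (hjk : j ≠ k) (hil : i ≠ l)
    (a b : A) : Commute (st_x i j hij a) (st_x k l hkl b) := by
  have h := st_rel_one (n := n) (A := A)
    (Or.inr (Or.inl ⟨i, j, k, l, hij, hkl, hjk, hil, a, b, rfl⟩))
  rw [map_commutatorElement] at h
  exact commutatorElement_eq_one_iff_commute.mp h

lemma stx_rel3 (i j k : Fin n) (hij : i ≠ j) (hjk : j ≠ k) (hik : i ≠ k) (a b : A) :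
    st_x i j hij a * st_x j k hjk b
      = st_x i k hik (a * b) * st_x j k hjk b * st_x i j hij a := by
  have h := st_rel_one (n := n) (A := A)
    (Or.inr (Or.inr ⟨i, j, k, hij, hjk, hik, a, b, rfl⟩))
  rw [_root_.map_mul, map_inv, map_commutatorElement] at h
  rw [st_mk_xgen, st_mk_xgen, st_mk_xgen] at h
  have h' : st_x i j hij a * st_x j k hjk b * (st_x i j hij a)⁻¹ * (st_x j k hjk b)⁻¹
      = st_x i k hik (a * b) := mul_inv_eq_one.mp h
  rw [← h']
  group

end Helpers
section Mat
open Matrix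
variable {n : ℕ} {A : Type*} [Ring A]

lemma tv_val (i j : Fin n) (hij : i ≠ j) (a : A) :
    (transvection' i j hij a).val = 1 + single i j a := rfl

lemma tv_mul_apply (p q : Fin n) (hpq : p ≠ q) (a : A) (M : Matrix (Fin n) (Fin n) A)
    (x y : Fin n) :
    ((transvection' p q hpq a).val * M) x y
      = M x y + (if x = p then a * M q y else 0) := by
  rw [tv_val, Matrix.add_mul, Matrix.one_mul, Matrix.add_apply]
  congr 1
  by_cases hx : x = p
  · subst hx; rw [if_pos rfl, single_mul_apply_same]
  · rw [if_neg hx]; exact single_mul_apply_of_ne _ _ _ _ _ hx _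

lemma tv_add (i j : Fin n) (hij : i ≠ j) (a b : A) :
    transvection' i j hij a * transvection' i j hij b = transvection' i j hij (a + b) := by
  apply Units.ext
  rw [Units.val_mul]
  simp only [tv_val, Matrix.mul_add, Matrix.add_mul, Matrix.one_mul, Matrix.mul_one,
    single_mul_single_of_ne _ _ _ _ hij.symm, single_add]
  abel

lemma tv_commute (i j k l : Fin n) (hij : i ≠ j) (hkl : k ≠ l) (hjk : j ≠ k) (hil : i ≠ l)
    (a b : A) :
    Commute (transvection' i j hij a) (transvection' k l hkl b) := by
  apply Units.ext
  rw [Units.val_mul, Units.val_mul]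
  simp only [tv_val, Matrix.mul_add, Matrix.add_mul, Matrix.one_mul, Matrix.mul_one,
    single_mul_single_of_ne _ _ _ _ hjk, single_mul_single_of_ne _ _ _ _ hil.symm]
  abel

lemma tv_rel3 (i j k : Fin n) (hij : i ≠ j) (hjk : j ≠ k) (hik : i ≠ k) (a b : A) :
    transvection' i j hij a * transvection' j k hjk b
      = transvection' i k hik (a * b) * transvection' j k hjk b * transvection' i j hij a := by
  apply Units.ext
  rw [Units.val_mul, Units.val_mul, Units.val_mul]
  simp only [tv_val, Matrix.mul_add, Matrix.add_mul, Matrix.one_mul, Matrix.mul_one,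
    single_mul_single_same,
    single_mul_single_of_ne _ _ _ _ hjk.symm, single_mul_single_of_ne _ _ _ _ hik.symm,
    zero_mul, mul_zero, add_zero, zero_add]
  abel

end Mat
section Hom
open Matrix
variable {n : ℕ} {A : Type*} [Ring A]

/-- The map on generators. -/
def stGenMap (g : SteinbergGen n A) : (Matrix (Fin n) (Fin n) A)ˣ :=
  transvection' g.1.1.1 g.1.1.2 g.1.2 g.2

lemma stGenMap_rels : ∀ r ∈ SteinbergRels n A,
    FreeGroup.lift (stGenMap (n := n) (A := A)) r = 1 := by
  intro r hr
  have hx : ∀ (i j : Fin n) (hij : i ≠ j) (a : A),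
      FreeGroup.lift (stGenMap (n := n) (A := A)) (xgen i j hij a)
        = transvection' i j hij a := fun i j hij a => FreeGroup.lift_apply_of
  rcases hr with ⟨i, j, hij, a, b, rfl⟩ | ⟨i, j, k, l, hij, hkl, hjk, hil, a, b, rfl⟩ |
    ⟨i, j, k, hij, hjk, hik, a, b, rfl⟩
  · rw [_root_.map_mul, _root_.map_mul, map_inv, hx, hx, hx, mul_inv_eq_one, tv_add]
  · rw [map_commutatorElement, hx, hx]
    exact commutatorElement_eq_one_iff_commute.mpr (tv_commute i j k l hij hkl hjk hil a b)
  · rw [_root_.map_mul, map_inv, map_commutatorElement, hx, hx, hx, mul_inv_eq_one,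
      commutatorElement_def]
    have h := tv_rel3 i j k hij hjk hik a b
    rw [h]
    group

/-- The homomorphism `st`. -/
def stHom : Steinberg n A →* (Matrix (Fin n) (Fin n) A)ˣ :=
  PresentedGroup.toGroup stGenMap_rels

lemma stHom_x (i j : Fin n) (hij : i ≠ j) (a : A) :
    stHom (st_x i j hij a) = transvection' i j hij a :=
  PresentedGroup.toGroup.of stGenMap_rels

end Hom
section Col
open Matrix
variable {n : ℕ} {A : Type*} [Ring A]

/-- The strictly-upper part of column `c`. -/
def Scol (c : Fin n) (m : Matrix (Fin n) (Fin n) A) : Matrix (Fin n) (Fin n) A :=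
  ∑ i : Fin n, if h : i < c then single i c (m i c) else 0

lemma Scol_apply (c : Fin n) (m : Matrix (Fin n) (Fin n) A) (x y : Fin n) :
    Scol c m x y = if x < c ∧ y = c then m x c else 0 := by
  rw [Scol, Matrix.sum_apply]
  rw [Finset.sum_eq_single x]
  · by_cases hx : x < c
    · rw [dif_pos hx]
      by_cases hy : y = c
      · subst hy; rw [single_apply_same, if_pos ⟨hx, rfl⟩]
      · rw [if_neg (fun h => hy h.2), single_apply_of_col_ne]
        exact fun h => hy h.symm
    · rw [dif_neg hx, if_neg (fun h => hx h.1), Matrix.zero_apply]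
  · intro i _ hix
    by_cases hi : i < c
    · rw [dif_pos hi]; exact single_apply_of_row_ne hix _ _ _
    · rw [dif_neg hi, Matrix.zero_apply]
  · intro h; exact absurd (Finset.mem_univ x) h

lemma Scol_mul_Scol (c : Fin n) (m m' : Matrix (Fin n) (Fin n) A) :
    Scol c m * Scol c m' = 0 := by
  rw [Scol, Finset.sum_mul]
  apply Finset.sum_eq_zero
  intro i _
  by_cases hi : i < c
  · rw [dif_pos hi, Scol, Finset.mul_sum]
    apply Finset.sum_eq_zero
    intro j _
    by_cases hj : j < c
    · rw [dif_pos hj]; exact single_mul_single_of_ne _ _ _ _ hj.ne' _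
    · rw [dif_neg hj, mul_zero]
  · rw [dif_neg hi, zero_mul]

lemma stdBasis_mul_Scol_lt (c p q : Fin n) (hqc : q < c) (w : A)
    (m : Matrix (Fin n) (Fin n) A) :
    single p q w * Scol c m = single p c (w * m q c) := by
  rw [Scol, Finset.mul_sum, Finset.sum_eq_single q]
  · rw [dif_pos hqc, single_mul_single_same]
  · intro i _ hiq
    by_cases hi : i < c
    · rw [dif_pos hi]; exact single_mul_single_of_ne _ _ _ _ (Ne.symm hiq) _
    · rw [dif_neg hi, mul_zero]
  · intro h; exact absurd (Finset.mem_univ q) h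

lemma stdBasis_mul_Scol_eq (c p : Fin n) (w : A) (m : Matrix (Fin n) (Fin n) A) :
    single p c w * Scol c m = 0 := by
  rw [Scol, Finset.mul_sum]
  apply Finset.sum_eq_zero
  intro i _
  by_cases hi : i < c
  · rw [dif_pos hi]; exact single_mul_single_of_ne _ _ _ _ hi.ne' _
  · rw [dif_neg hi, mul_zero]

lemma Scol_mul_stdBasis (c p q : Fin n) (hpc : p ≠ c) (w : A)
    (m : Matrix (Fin n) (Fin n) A) :
    Scol c m * single p q w = 0 := by
  rw [Scol, Finset.sum_mul]
  apply Finset.sum_eq_zero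
  intro i _
  by_cases hi : i < c
  · rw [dif_pos hi]; exact single_mul_single_of_ne _ _ _ _ (Ne.symm hpc) _
  · rw [dif_neg hi, zero_mul]

lemma Scol_update (c p : Fin n) (hpc : p < c) (w : A) (m m' : Matrix (Fin n) (Fin n) A)
    (h : ∀ i : Fin n, i < c → m' i c = m i c + (if i = p then w else 0)) :
    Scol c m' = Scol c m + single p c w := by
  have hw : single p c w
      = ∑ i : Fin n, if i = p then single p c w else (0 : Matrix (Fin n) (Fin n) A) := by
    rw [Finset.sum_ite_eq' Finset.univ p (fun _ => single p c w),
      if_pos (Finset.mem_univ p)]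
  rw [Scol, Scol, hw, ← Finset.sum_add_distrib]
  apply Finset.sum_congr rfl
  intro i _
  by_cases hi : i < c
  · rw [dif_pos hi, dif_pos hi, h i hi]
    by_cases hip : i = p
    · subst hip; rw [if_pos rfl, if_pos rfl, single_add]
    · rw [if_neg hip, if_neg hip, add_zero, add_zero]
  · rw [dif_neg hi, dif_neg hi, if_neg (fun hip => hi (by rw [hip]; exact hpc)), add_zero]

/-- The factor used in column products (Steinberg side). -/
def colFunSt (c : Fin n) (m : Matrix (Fin n) (Fin n) A) (i : Fin n) : Steinberg n A :=
  if h : i < c then st_x i c h.ne (m i c) else 1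

/-- The factor used in column products (matrix side). -/
def colFunMat (c : Fin n) (m : Matrix (Fin n) (Fin n) A) (i : Fin n) :
    (Matrix (Fin n) (Fin n) A)ˣ :=
  if h : i < c then transvection' i c h.ne (m i c) else 1

def colSt (c : Fin n) (m : Matrix (Fin n) (Fin n) A) : Steinberg n A :=
  ((List.finRange n).map (colFunSt c m)).prod

def colMat (c : Fin n) (m : Matrix (Fin n) (Fin n) A) : (Matrix (Fin n) (Fin n) A)ˣ :=
  ((List.finRange n).map (colFunMat c m)).prod

lemma colMat_val (c : Fin n) (m : Matrix (Fin n) (Fin n) A) :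
    (colMat c m).val = 1 + Scol c m := by
  have key : ∀ l : List (Fin n), ((l.map (colFunMat c m)).prod).val
      = 1 + (l.map (fun i => if h : i < c then single i c (m i c) else 0)).sum := by
    intro l
    induction l with
    | nil => simp
    | cons i l ih =>
      rw [List.map_cons, List.prod_cons, Units.val_mul, ih, List.map_cons, List.sum_cons]
      by_cases hi : i < c
      · rw [colFunMat, dif_pos hi, dif_pos hi, tv_val, add_mul, one_mul, mul_add, mul_one]
        have hz : single i c (m i c)
            * (l.map (fun i => if h : i < c then single i c (m i c) else 0)).sum
            = 0 := by
          rw [← List.sum_map_mul_left]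
          apply List.sum_eq_zero
          intro x hx
          rw [List.mem_map] at hx
          obtain ⟨j, _, rfl⟩ := hx
          by_cases hj : j < c
          · rw [dif_pos hj]; exact single_mul_single_of_ne _ _ _ _ hj.ne' _
          · rw [dif_neg hj, mul_zero]
        rw [hz, add_zero]
        abel
      · rw [colFunMat, dif_neg hi, dif_neg hi, Units.val_one, one_mul, zero_add]
  rw [colMat, key, Scol, Fin.sum_univ_def]

lemma colMat_inv_val (c : Fin n) (m : Matrix (Fin n) (Fin n) A) :
    ((colMat c m)⁻¹).val = 1 - Scol c m := by
  apply Units.inv_eq_of_mul_eq_one_right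
  rw [colMat_val, add_mul, one_mul, mul_sub, mul_one, Scol_mul_Scol, sub_zero]
  abel

lemma colMat_update (c p : Fin n) (hpc : p < c) (w : A) (m m' : Matrix (Fin n) (Fin n) A)
    (h : ∀ i : Fin n, i < c → m' i c = m i c + (if i = p then w else 0)) :
    colMat c m' = transvection' p c hpc.ne w * colMat c m := by
  apply Units.ext
  rw [Units.val_mul, colMat_val, colMat_val, tv_val,
    Scol_update c p hpc w m m' h, add_mul, one_mul, mul_add, mul_one,
    stdBasis_mul_Scol_eq]
  abel

end Col
section UTsec
open Matrix
variable {n : ℕ} {A : Type*} [Ring A]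

/-- Unitriangular, with all columns of index `≥ k` trivial. -/
def UT (k : ℕ) (m : Matrix (Fin n) (Fin n) A) : Prop :=
  (∀ i, m i i = 1) ∧ (∀ i j : Fin n, j < i → m i j = 0) ∧
    (∀ i j : Fin n, i ≠ j → k ≤ j.val → m i j = 0)

lemma UT_one (k : ℕ) : UT k (1 : Matrix (Fin n) (Fin n) A) := by
  refine ⟨fun i => Matrix.one_apply_eq i, fun i j hji => ?_, fun i j hij _ => ?_⟩
  · exact Matrix.one_apply_ne (Ne.symm hji.ne)
  · exact Matrix.one_apply_ne hij

lemma UT_zero_eq_one {m : Matrix (Fin n) (Fin n) A} (hm : UT 0 m) : m = 1 := by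
  ext i j
  by_cases hij : i = j
  · subst hij; rw [hm.1 i, Matrix.one_apply_eq]
  · rw [hm.2.2 i j hij (Nat.zero_le _), Matrix.one_apply_ne hij]

lemma UT_of_succ_of_le {k : ℕ} (hk : n ≤ k) {m : Matrix (Fin n) (Fin n) A}
    (hm : UT (k + 1) m) : UT k m :=
  ⟨hm.1, hm.2.1, fun _ j _ hj => absurd (lt_of_lt_of_le j.isLt hk) (not_lt.mpr hj)⟩

lemma UT_row (c : Fin n) {m : Matrix (Fin n) (Fin n) A}
    (hm : UT (c.val + 1) m) (y : Fin n) : m c y = if y = c then 1 else 0 := by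
  by_cases hy : y = c
  · subst hy; rw [if_pos rfl, hm.1]
  · rw [if_neg hy]
    rcases lt_or_gt_of_ne (Ne.symm hy) with h | h
    · exact hm.2.2 c y (fun he => hy he.symm) (by omega)
    · exact hm.2.1 c y h

lemma Scol_mul_self (c : Fin n) {m : Matrix (Fin n) (Fin n) A}
    (hm : UT (c.val + 1) m) : Scol c m * m = Scol c m := by
  ext x y
  rw [Matrix.mul_apply, Finset.sum_eq_single c]
  · rw [UT_row c hm y]
    by_cases hy : y = c
    · subst hy; rw [if_pos rfl, mul_one]
    · rw [if_neg hy, mul_zero, Scol_apply, if_neg (fun h => hy h.2)]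
  · intro l _ hlc
    rw [Scol_apply, if_neg (fun h => hlc h.2), zero_mul]
  · intro h; exact absurd (Finset.mem_univ c) h

end UTsec
section UTsec2
open Matrix
variable {n : ℕ} {A : Type*} [Ring A]

lemma UT_clear (c : Fin n) {m : Matrix (Fin n) (Fin n) A} (hm : UT (c.val + 1) m) :
    UT c.val (m - Scol c m) := by
  refine ⟨fun i => ?_, fun i j hji => ?_, fun i j hij hj => ?_⟩
  · rw [Matrix.sub_apply, Scol_apply, if_neg (fun h => h.1.ne h.2), sub_zero, hm.1]
  · rw [Matrix.sub_apply, Scol_apply, hm.2.1 i j hji,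
      if_neg (fun h => absurd (h.2 ▸ hji) (asymm h.1)), sub_zero]
  · rw [Matrix.sub_apply, Scol_apply]
    by_cases hjc : j = c
    · subst hjc
      by_cases hic : i < j
      · rw [if_pos ⟨hic, rfl⟩, sub_self]
      · have hji : j < i := by
          rcases lt_trichotomy i j with h | h | h
          · exact absurd h hic
          · exact absurd h hij
          · exact h
        rw [if_neg (fun h => hic h.1), sub_zero, hm.2.1 i j hji]
    · rw [if_neg (fun h => hjc h.2), sub_zero]
      exact hm.2.2 i j hij (by
        have : j.val ≠ c.val := fun h => hjc (Fin.ext h)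
        omega)

lemma clear_mul_val (c : Fin n) (M : (Matrix (Fin n) (Fin n) A)ˣ)
    (hm : UT (c.val + 1) M.val) :
    ((colMat c M.val)⁻¹ * M).val = M.val - Scol c M.val := by
  rw [Units.val_mul, colMat_inv_val, sub_mul, one_mul, Scol_mul_self c hm]

lemma mem_UnitriSet_iff_UT (M : (Matrix (Fin n) (Fin n) A)ˣ) :
    M ∈ UnitriSet n A ↔ UT n M.val := by
  constructor
  · intro h
    exact ⟨h.1, h.2, fun i j _ hj => absurd j.isLt (not_lt.mpr hj)⟩
  · intro h
    exact ⟨h.1, h.2.1⟩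

lemma UnitriSet_one : (1 : (Matrix (Fin n) (Fin n) A)ˣ) ∈ UnitriSet n A := by
  rw [mem_UnitriSet_iff_UT]
  exact UT_one n

lemma UnitriSet_mul {M N : (Matrix (Fin n) (Fin n) A)ˣ} (hM : M ∈ UnitriSet n A)
    (hN : N ∈ UnitriSet n A) : M * N ∈ UnitriSet n A := by
  constructor
  · intro i
    rw [Units.val_mul, Matrix.mul_apply, Finset.sum_eq_single i]
    · rw [hM.1, hN.1, one_mul]
    · intro l _ hli
      rcases lt_or_gt_of_ne hli with h | h
      · rw [hM.2 i l h, zero_mul]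
      · rw [hN.2 l i h, mul_zero]
    · intro h; exact absurd (Finset.mem_univ i) h
  · intro i j hji
    rw [Units.val_mul, Matrix.mul_apply]
    apply Finset.sum_eq_zero
    intro l _
    rcases lt_or_ge l i with h | h
    · rw [hM.2 i l h, zero_mul]
    · rw [hN.2 l j (lt_of_lt_of_le hji h), mul_zero]

lemma UnitriSet_inv {M : (Matrix (Fin n) (Fin n) A)ˣ} (hM : M ∈ UnitriSet n A) :
    M⁻¹ ∈ UnitriSet n A := by
  set B : Matrix (Fin n) (Fin n) A := (M⁻¹ : (Matrix (Fin n) (Fin n) A)ˣ).val with hB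
  have hMB : M.val * B = 1 := M.mul_inv
  have key : ∀ d : ℕ, ∀ i j : Fin n, n ≤ i.val + d → j < i → B i j = 0 := by
    intro d
    induction d with
    | zero => intro i j h _; exact absurd i.isLt (by omega)
    | succ d ih =>
      intro i j hd hji
      have h0 : (M.val * B) i j = 0 := by
        rw [hMB]; exact Matrix.one_apply_ne hji.ne'
      rw [Matrix.mul_apply, Finset.sum_eq_single i] at h0
      · rwa [hM.1, one_mul] at h0
      · intro l _ hli
        rcases lt_or_gt_of_ne hli with h | h
        · rw [hM.2 i l h, zero_mul]
        · have hv : i.val < l.val := h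
          rw [ih l j (by omega) (lt_trans hji h), mul_zero]
      · intro h; exact absurd (Finset.mem_univ i) h
  have hlow : ∀ i j : Fin n, j < i → B i j = 0 := fun i j h => key n i j (by omega) h
  refine ⟨fun i => ?_, hlow⟩
  have h1 : (M.val * B) i i = 1 := by rw [hMB]; exact Matrix.one_apply_eq i
  rw [Matrix.mul_apply, Finset.sum_eq_single i] at h1
  · rwa [hM.1, one_mul] at h1
  · intro l _ hli
    rcases lt_or_gt_of_ne hli with h | h
    · rw [hM.2 i l h, zero_mul]
    · rw [hlow l i h, mul_zero]
  · intro h; exact absurd (Finset.mem_univ i) h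

lemma tv_mem_UnitriSet {i j : Fin n} (hij : i < j) (a : A) :
    transvection' i j hij.ne a ∈ UnitriSet n A := by
  constructor
  · intro x
    rw [tv_val, Matrix.add_apply, Matrix.one_apply_eq,
      show single i j a x x = 0 from
        single_apply_of_ne _ _ _ _ _ (fun h => hij.ne (h.1.trans h.2.symm)), add_zero]
  · intro x y hyx
    rw [tv_val, Matrix.add_apply, Matrix.one_apply_ne hyx.ne',
      show single i j a x y = 0 from
        single_apply_of_ne _ _ _ _ _ (fun h => absurd hij
          (by rw [h.1, h.2]; exact asymm hyx)), add_zero]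

end UTsec2
section SList
open Matrix
variable {n : ℕ} {A : Type*} [Ring A]

lemma comm_col (p c : Fin n) (hpc : p < c) (w : A) (i : Fin n) (hic : i < c) (b : A) :
    Commute (st_x p c hpc.ne w) (st_x i c hic.ne b) := by
  by_cases hip : i = p
  · subst hip
    have : st_x i c hpc.ne w * st_x i c hpc.ne b = st_x i c hpc.ne b * st_x i c hpc.ne w := by
      rw [stx_add, stx_add, add_comm]
    exact this
  · exact stx_comm p c i c hpc.ne hic.ne hic.ne' hpc.ne w b

lemma comm_colFun (p c : Fin n) (hpc : p < c) (w : A) (m : Matrix (Fin n) (Fin n) A)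
    (i : Fin n) : Commute (st_x p c hpc.ne w) (colFunSt c m i) := by
  unfold colFunSt
  by_cases hi : i < c
  · rw [dif_pos hi]; exact comm_col p c hpc w i hi _
  · rw [dif_neg hi]; exact Commute.one_right _

lemma comm_offcolFun (p q c : Fin n) (hpq : p ≠ q) (hpc : p ≠ c) (a : A)
    (m : Matrix (Fin n) (Fin n) A) (i : Fin n) (hiq : i ≠ q) :
    Commute (st_x p q hpq a) (colFunSt c m i) := by
  unfold colFunSt
  by_cases hi : i < c
  · rw [dif_pos hi]; exact stx_comm p q i c hpq hi.ne hiq.symm hpc a _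
  · rw [dif_neg hi]; exact Commute.one_right _

lemma colSt_update_list (c p : Fin n) (hpc : p < c) (w : A)
    (m m' : Matrix (Fin n) (Fin n) A)
    (h : ∀ i : Fin n, i < c → m' i c = m i c + (if i = p then w else 0)) :
    ∀ l : List (Fin n), p ∈ l → l.Nodup →
      (l.map (colFunSt c m')).prod = st_x p c hpc.ne w * (l.map (colFunSt c m)).prod := by
  intro l
  induction l with
  | nil => intro hmem; exact absurd hmem List.not_mem_nil
  | cons i l ih =>
    intro hmem hnd
    obtain ⟨hil, hnd'⟩ := List.nodup_cons.mp hnd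
    rw [List.map_cons, List.prod_cons, List.map_cons, List.prod_cons]
    rcases List.mem_cons.mp hmem with heq | hpl
    · subst heq
      have hf : l.map (colFunSt c m') = l.map (colFunSt c m) := by
        apply List.map_congr_left
        intro x hx
        unfold colFunSt
        by_cases hxc : x < c
        · rw [dif_pos hxc, dif_pos hxc, h x hxc,
            if_neg (fun hxp => hil (by rw [← hxp]; exact hx)), add_zero]
        · rw [dif_neg hxc, dif_neg hxc]
      rw [hf, ← mul_assoc]
      congr 1
      unfold colFunSt
      rw [dif_pos hpc, dif_pos hpc, h p hpc, if_pos rfl, stx_add, add_comm]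
    · have hiq : colFunSt c m' i = colFunSt c m i := by
        unfold colFunSt
        by_cases hic : i < c
        · rw [dif_pos hic, dif_pos hic, h i hic,
            if_neg (fun hip => hil (by rw [hip]; exact hpl)), add_zero]
        · rw [dif_neg hic, dif_neg hic]
      rw [hiq, ih hpl hnd', ← mul_assoc, ← (comm_colFun p c hpc w m i).eq, mul_assoc]

lemma colSt_update (c p : Fin n) (hpc : p < c) (w : A)
    (m m' : Matrix (Fin n) (Fin n) A)
    (h : ∀ i : Fin n, i < c → m' i c = m i c + (if i = p then w else 0)) :
    colSt c m' = st_x p c hpc.ne w * colSt c m :=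
  colSt_update_list c p hpc w m m' h (List.finRange n) (List.mem_finRange p)
    (List.nodup_finRange n)

lemma push_list (p q c : Fin n) (hpq : p < q) (hqc : q < c) (a : A)
    (m : Matrix (Fin n) (Fin n) A) :
    ∀ l : List (Fin n), q ∈ l → l.Nodup →
      st_x p q hpq.ne a * (l.map (colFunSt c m)).prod
        = st_x p c (hpq.trans hqc).ne (a * m q c)
            * ((l.map (colFunSt c m)).prod * st_x p q hpq.ne a) := by
  have hpc : p < c := hpq.trans hqc
  intro l
  induction l with
  | nil => intro hmem; exact absurd hmem List.not_mem_nil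
  | cons i l ih =>
    intro hmem hnd
    obtain ⟨hil, hnd'⟩ := List.nodup_cons.mp hnd
    rw [List.map_cons, List.prod_cons]
    rcases List.mem_cons.mp hmem with heq | hql
    · subst heq
      have hP : Commute (st_x p q hpq.ne a) ((l.map (colFunSt c m)).prod) := by
        apply Commute.list_prod_right
        intro x hx
        obtain ⟨j, hj, rfl⟩ := List.mem_map.mp hx
        exact comm_offcolFun p q c hpq.ne hpc.ne a m j (fun hjq => hil (hjq ▸ hj))
      have hfq : colFunSt c m q = st_x q c hqc.ne (m q c) := by
        unfold colFunSt; rw [dif_pos hqc]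
      rw [hfq, ← mul_assoc, stx_rel3 p q c hpq.ne hqc.ne hpc.ne a (m q c)]
      simp only [mul_assoc]
      rw [hP.eq]
    · have hiq : i ≠ q := fun hiq => hil (hiq ▸ hql)
      rw [← mul_assoc, (comm_offcolFun p q c hpq.ne hpc.ne a m i hiq).eq, mul_assoc,
        ih hql hnd', ← mul_assoc, ← (comm_colFun p c hpc (a * m q c) m i).eq]
      simp only [mul_assoc]

lemma push (p q c : Fin n) (hpq : p < q) (hqc : q < c) (a : A)
    (m : Matrix (Fin n) (Fin n) A) :
    st_x p q hpq.ne a * colSt c m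
      = st_x p c (hpq.trans hqc).ne (a * m q c) * (colSt c m * st_x p q hpq.ne a) :=
  push_list p q c hpq hqc a m (List.finRange n) (List.mem_finRange q)
    (List.nodup_finRange n)

lemma st_colSt (c : Fin n) (m : Matrix (Fin n) (Fin n) A) :
    stHom (colSt c m) = colMat c m := by
  rw [colSt, colMat, MonoidHom.map_list_prod, List.map_map]
  congr 1
  apply List.map_congr_left
  intro i _
  simp only [Function.comp_apply]
  unfold colFunSt colFunMat
  by_cases hi : i < c
  · rw [dif_pos hi, dif_pos hi, stHom_x]
  · rw [dif_neg hi, dif_neg hi, _root_.map_one]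

lemma colSt_mem_Uplus (c : Fin n) (m : Matrix (Fin n) (Fin n) A) :
    colSt c m ∈ Uplus n A := by
  apply Subgroup.list_prod_mem
  intro x hx
  obtain ⟨i, _, rfl⟩ := List.mem_map.mp hx
  unfold colFunSt
  by_cases hi : i < c
  · rw [dif_pos hi]
    exact Subgroup.subset_closure ⟨i, c, hi, m i c, rfl⟩
  · rw [dif_neg hi]
    exact one_mem _

end SList
section SAux
open Matrix

def sAux {n : ℕ} {A : Type*} [Ring A] : ℕ → (Matrix (Fin n) (Fin n) A)ˣ → Steinberg n A
  | 0, _ => 1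
  | k + 1, M =>
    if h : k < n then
      colSt ⟨k, h⟩ M.val * sAux k ((colMat ⟨k, h⟩ M.val)⁻¹ * M)
    else sAux k M

variable {n : ℕ} {A : Type*} [Ring A]

lemma sAux_zero (M : (Matrix (Fin n) (Fin n) A)ˣ) : sAux 0 M = 1 := rfl

lemma sAux_succ (k : ℕ) (M : (Matrix (Fin n) (Fin n) A)ˣ) :
    sAux (k + 1) M = if h : k < n then
      colSt ⟨k, h⟩ M.val * sAux k ((colMat ⟨k, h⟩ M.val)⁻¹ * M)
    else sAux k M := rfl

lemma sAux_mem (k : ℕ) (M : (Matrix (Fin n) (Fin n) A)ˣ) : sAux k M ∈ Uplus n A := by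
  induction k generalizing M with
  | zero => exact one_mem _
  | succ k ih =>
    rw [sAux_succ]
    by_cases h : k < n
    · rw [dif_pos h]; exact mul_mem (colSt_mem_Uplus _ _) (ih _)
    · rw [dif_neg h]; exact ih _

lemma st_sAux (k : ℕ) (M : (Matrix (Fin n) (Fin n) A)ˣ) (hm : UT k M.val) :
    stHom (sAux k M) = M := by
  induction k generalizing M with
  | zero => rw [sAux_zero, _root_.map_one]; exact (Units.ext (UT_zero_eq_one hm)).symm
  | succ k ih =>
    rw [sAux_succ]
    by_cases h : k < n
    · rw [dif_pos h, _root_.map_mul, st_colSt, ih _ ?ut]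
      · exact mul_inv_cancel_left _ _
      case ut =>
        have hval : ((colMat (⟨k, h⟩ : Fin n) M.val)⁻¹ * M).val
            = M.val - Scol ⟨k, h⟩ M.val := clear_mul_val _ M hm
        rw [hval]
        exact UT_clear _ hm
    · rw [dif_neg h]; exact ih _ (UT_of_succ_of_le (le_of_not_gt h) hm)

lemma sAux_one (k : ℕ) : sAux k (1 : (Matrix (Fin n) (Fin n) A)ˣ) = 1 := by
  induction k with
  | zero => rfl
  | succ k ih =>
    rw [sAux_succ]
    by_cases h : k < n
    · rw [dif_pos h]
      have hC : colMat (⟨k, h⟩ : Fin n) (1 : (Matrix (Fin n) (Fin n) A)ˣ).val = 1 := by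
        apply Units.ext
        rw [colMat_val, Units.val_one]
        have hS : Scol (⟨k, h⟩ : Fin n) (1 : Matrix (Fin n) (Fin n) A) = 0 := by
          ext x y
          rw [Scol_apply, Matrix.zero_apply]
          by_cases hxy : x < (⟨k, h⟩ : Fin n) ∧ y = (⟨k, h⟩ : Fin n)
          · rw [if_pos hxy]; exact Matrix.one_apply_ne hxy.1.ne
          · rw [if_neg hxy]
        rw [hS, add_zero]
      have hcolSt : colSt (⟨k, h⟩ : Fin n)
          (1 : (Matrix (Fin n) (Fin n) A)ˣ).val = 1 := by
        apply List.prod_eq_one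
        intro x hx
        obtain ⟨i, _, rfl⟩ := List.mem_map.mp hx
        unfold colFunSt
        by_cases hi : i < (⟨k, h⟩ : Fin n)
        · rw [dif_pos hi, Units.val_one, Matrix.one_apply_ne hi.ne, stx_zero]
        · rw [dif_neg hi]
      rw [hcolSt, hC, inv_one, one_mul, one_mul, ih]
    · rw [dif_neg h]; exact ih

end SAux
section Key
open Matrix
variable {n : ℕ} {A : Type*} [Ring A]

lemma key_lemma : ∀ (k : ℕ) (M : (Matrix (Fin n) (Fin n) A)ˣ), UT k M.val →
    ∀ (p q : Fin n) (hpq : p < q), q.val < k → ∀ a : A,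
      sAux k (transvection' p q hpq.ne a * M) = st_x p q hpq.ne a * sAux k M := by
  intro k
  induction k with
  | zero => intro M _ p q _ hq; exact absurd hq (Nat.not_lt_zero _)
  | succ k ih =>
    intro M hM p q hpq hq a
    by_cases hk : k < n
    · rw [sAux_succ, sAux_succ, dif_pos hk, dif_pos hk]
      set c : Fin n := ⟨k, hk⟩ with hc
      have hcol : ∀ i : Fin n, (transvection' p q hpq.ne a * M).val i c
          = M.val i c + (if i = p then a * M.val q c else 0) := by
        intro i
        rw [Units.val_mul, tv_mul_apply]
      by_cases hqc : q = c
      · subst hqc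
        have hb : M.val c c = 1 := hM.1 c
        have hcol' : ∀ i : Fin n, i < c → (transvection' p c hpq.ne a * M).val i c
            = M.val i c + (if i = p then a else 0) := by
          intro i _
          rw [hcol i, hb, mul_one]
        have h1 : colSt c (transvection' p c hpq.ne a * M).val
            = st_x p c hpq.ne a * colSt c M.val :=
          colSt_update c p hpq a _ _ hcol'
        have h2 : colMat c (transvection' p c hpq.ne a * M).val
            = transvection' p c hpq.ne a * colMat c M.val :=
          colMat_update c p hpq a _ _ hcol'
        have harg : (colMat c (transvection' p c hpq.ne a * M).val)⁻¹
              * (transvection' p c hpq.ne a * M)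
            = (colMat c M.val)⁻¹ * M := by
          rw [h2]
          group
        rw [h1, harg, mul_assoc]
      · have hqk : q.val < k := by
          have hqne : q.val ≠ k := fun h => hqc (Fin.ext h)
          omega
        have hqc2 : q < c := hqk
        have hpc : p < c := hpq.trans hqc2
        have hcol' : ∀ i : Fin n, i < c → (transvection' p q hpq.ne a * M).val i c
            = M.val i c + (if i = p then a * M.val q c else 0) := fun i _ => hcol i
        have h1 : colSt c (transvection' p q hpq.ne a * M).val
            = st_x p c hpc.ne (a * M.val q c) * colSt c M.val :=
          colSt_update c p hpc _ _ _ hcol'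
        have h2 : colMat c (transvection' p q hpq.ne a * M).val
            = transvection' p c hpc.ne (a * M.val q c) * colMat c M.val :=
          colMat_update c p hpc _ _ _ hcol'
        have hU : transvection' p q hpq.ne a * colMat c M.val
            = transvection' p c hpc.ne (a * M.val q c) * colMat c M.val
                * transvection' p q hpq.ne a := by
          apply Units.ext
          simp only [Units.val_mul, colMat_val, tv_val]
          simp only [add_mul, mul_add, one_mul, mul_one,
            stdBasis_mul_Scol_lt c p q hqc2 a M.val,
            stdBasis_mul_Scol_eq c p (a * M.val q c) M.val,
            Scol_mul_stdBasis c p q hpc.ne a M.val,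
            single_mul_single_of_ne (a * M.val q c) p c _ hpc.ne' a,
            add_zero, zero_add]
          abel
        have harg : (colMat c (transvection' p q hpq.ne a * M).val)⁻¹
              * (transvection' p q hpq.ne a * M)
            = transvection' p q hpq.ne a * ((colMat c M.val)⁻¹ * M) := by
          rw [h2]
          have h4 : (transvection' p c hpc.ne (a * M.val q c) * colMat c M.val)⁻¹
                * transvection' p q hpq.ne a
              = transvection' p q hpq.ne a * (colMat c M.val)⁻¹ := by
            rw [inv_mul_eq_iff_eq_mul, ← mul_assoc, eq_mul_inv_iff_mul_eq]
            exact hU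
          rw [← mul_assoc, h4, mul_assoc]
        have hUT : UT k ((colMat c M.val)⁻¹ * M).val := by
          have hval : ((colMat c M.val)⁻¹ * M).val = M.val - Scol c M.val :=
            clear_mul_val c M hM
          rw [hval]
          exact UT_clear c hM
        rw [h1, harg, ih _ hUT p q hpq hqk a]
        conv_rhs => rw [← mul_assoc, push p q c hpq hqc2 a M.val]
        simp only [mul_assoc]
    · rw [sAux_succ, sAux_succ, dif_neg hk, dif_neg hk]
      exact ih M (UT_of_succ_of_le (le_of_not_gt hk) hM) p q hpq (by omega) a

end Key
theorem stmt13 (n : ℕ) (A : Type*) [Ring A] (hn : 2 ≤ n) :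
    ∃ st : Steinberg n A →* (Matrix (Fin n) (Fin n) A)ˣ,
      (∀ (i j : Fin n) (hij : i ≠ j) (a : A), st (st_x i j hij a) = transvection' i j hij a) ∧
      Set.InjOn st (Uplus n A : Set (Steinberg n A)) ∧
      st '' (Uplus n A : Set (Steinberg n A)) = UnitriSet n A := by
  refine ⟨stHom, fun i j hij a => stHom_x i j hij a, ?_, ?_⟩
  case _ =>
    have him : ∀ g ∈ Uplus n A, stHom g ∈ UnitriSet n A := by
      intro g hg
      refine Subgroup.closure_induction ?_ ?_ ?_ ?_ hg
      · rintro x ⟨i, j, hij, a, rfl⟩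
        rw [stHom_x]
        exact tv_mem_UnitriSet hij a
      · rw [_root_.map_one]; exact UnitriSet_one
      · intro x y _ _ px py
        rw [_root_.map_mul]; exact UnitriSet_mul px py
      · intro x _ px
        rw [map_inv]; exact UnitriSet_inv px
    have key' : ∀ (g : Steinberg n A), g ∈ Uplus n A →
        ∀ M : (Matrix (Fin n) (Fin n) A)ˣ, UT n M.val →
          sAux n (stHom g * M) = g * sAux n M := by
      intro g hg
      refine Subgroup.closure_induction ?_ ?_ ?_ ?_ hg
      · rintro x ⟨i, j, hij, a, rfl⟩ M hM
        rw [stHom_x]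
        exact key_lemma n M hM i j hij j.isLt a
      · intro M hM
        rw [_root_.map_one, one_mul, one_mul]
      · intro x y hx hy px py M hM
        have hyM : UT n ((stHom y) * M).val :=
          (mem_UnitriSet_iff_UT _).mp
            (UnitriSet_mul (him y hy) ((mem_UnitriSet_iff_UT M).mpr hM))
        rw [_root_.map_mul, mul_assoc, px _ hyM, py M hM, mul_assoc]
      · intro x hx px M hM
        have hxM : UT n ((stHom x)⁻¹ * M).val :=
          (mem_UnitriSet_iff_UT _).mp
            (UnitriSet_mul (UnitriSet_inv (him x hx)) ((mem_UnitriSet_iff_UT M).mpr hM))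
        have hstep := px ((stHom x)⁻¹ * M) hxM
        rw [mul_inv_cancel_left] at hstep
        rw [map_inv, hstep, inv_mul_cancel_left]
    intro g hg h hh he
    have hg1 := key' g hg 1 ((mem_UnitriSet_iff_UT 1).mp UnitriSet_one)
    have hh1 := key' h hh 1 ((mem_UnitriSet_iff_UT 1).mp UnitriSet_one)
    rw [mul_one, sAux_one, mul_one] at hg1 hh1
    rw [← hg1, ← hh1, he]
  case _ =>
    ext M
    constructor
    · rintro ⟨g, hg, rfl⟩
      refine Subgroup.closure_induction ?_ ?_ ?_ ?_ hg
      · rintro x ⟨i, j, hij, a, rfl⟩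
        rw [stHom_x]
        exact tv_mem_UnitriSet hij a
      · rw [_root_.map_one]; exact UnitriSet_one
      · intro x y _ _ px py
        rw [_root_.map_mul]; exact UnitriSet_mul px py
      · intro x _ px
        rw [map_inv]; exact UnitriSet_inv px
    · intro hM
      refine ⟨sAux n M, sAux_mem n M, ?_⟩
      exact st_sAux n M ((mem_UnitriSet_iff_UT M).mp hM)
end

section
/- Let K be a commutative ring, A a unital K-algebra that is a finitely generated K-module, and K local. Then A is semi-local, i.e. A/Jac(A) is a semi-simple ring. -/
section Aux

private lemma simple_is_semisimple {R M : Type*} [Ring R] [AddCommGroup M] [Module R M]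
    [IsSimpleModule R M] : IsSemisimpleModule R M := by
  constructor

open LinearMap in
private lemma pi_semisimple {R : Type*} [Ring R] {ι : Type*} [Fintype ι] [DecidableEq ι]
    (p : ι → Type*) [∀ i, AddCommGroup (p i)] [∀ i, Module R (p i)]
    [∀ i, IsSemisimpleModule R (p i)] : IsSemisimpleModule R (∀ i, p i) :=
  isSemisimpleModule_of_isSemisimpleModule_submodule' (p := (range <| single R p ·))
    (fun _ ↦ .range _) (by simp_rw [range_eq_map, Submodule.iSup_map_single, Submodule.pi_top])

private lemma semisimple_of_artinian_jacobson_bot {B : Type*} [Ring B]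
    [IsArtinianRing B] (hj : (⊥ : Ideal B).jacobson = ⊥) : IsSemisimpleRing B := by
  classical
  obtain ⟨I₀, ⟨t, ht, hI⟩, hmin⟩ := IsArtinian.set_has_minimal
    {I : Ideal B | ∃ t : Finset (Ideal B), (∀ M ∈ t, M.IsMaximal) ∧ I = t.inf id}
    ⟨⊤, ∅, by simp, by simp⟩
  subst hI
  have hbot : t.inf id = ⊥ := by
    have hle : t.inf id ≤ (⊥ : Ideal B).jacobson := by
      rw [Ideal.jacobson]
      refine le_sInf ?_
      rintro M ⟨-, hM⟩
      by_contra h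
      refine hmin ((insert M t).inf id) ⟨insert M t, ?_, rfl⟩ ?_
      · intro N hN
        rcases Finset.mem_insert.mp hN with rfl | hN
        · exact hM
        · exact ht N hN
      · rw [Finset.inf_insert]
        exact lt_of_le_of_ne inf_le_right (fun he => h (he ▸ inf_le_left (a := id M)))
    rw [hj] at hle
    exact le_bot_iff.mp hle
  haveI : ∀ i : t, IsSimpleModule B (B ⧸ (i : Ideal B)) := fun i =>
    isSimpleModule_iff_isCoatom.mpr (ht i i.2).out
  haveI : ∀ i : t, IsSemisimpleModule B (B ⧸ (i : Ideal B)) := fun i => simple_is_semisimple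
  haveI : IsSemisimpleModule B (∀ i : t, B ⧸ (i : Ideal B)) := pi_semisimple _
  let f : B →ₗ[B] (∀ i : t, B ⧸ (i : Ideal B)) := LinearMap.pi fun i => (i : Ideal B).mkQ
  have hker : LinearMap.ker f = ⊥ := by
    rw [LinearMap.ker_pi]
    simp only [Submodule.ker_mkQ]
    rw [← hbot, Finset.inf_eq_iInf, iInf_subtype]
    rfl
  exact IsSemisimpleModule.congr (M := ↥(LinearMap.range f))
    (LinearEquiv.ofInjective f (LinearMap.ker_eq_bot.mp hker))

private lemma quot_jacobson_bot (A : Type*) [Ring A] :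
    (⊥ : Ideal ((⊥ : TwoSidedIdeal A).jacobson.ringCon.Quotient)).jacobson = ⊥ := by
  set J := (⊥ : TwoSidedIdeal A).jacobson with hJ
  let π : A →+* J.ringCon.Quotient := J.ringCon.mk'
  have hπs : Function.Surjective π := fun b => Quotient.inductionOn' b fun a => ⟨a, rfl⟩
  have hker : ∀ x : A, π x = 0 ↔ x ∈ J := fun x => by
    rw [show (0 : J.ringCon.Quotient) = π 0 from (map_zero π).symm]
    rw [show (π x = π 0) ↔ J.ringCon x 0 from RingCon.eq _]
    rw [TwoSidedIdeal.rel_iff, sub_zero]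
  have hJJ : J.jacobson = J := by
    have h1 : TwoSidedIdeal.asIdeal J.jacobson = TwoSidedIdeal.asIdeal J := by
      rw [TwoSidedIdeal.asIdeal_jacobson, hJ, TwoSidedIdeal.asIdeal_jacobson,
        Ideal.jacobson_idem]
    ext x
    rw [← TwoSidedIdeal.mem_asIdeal, h1, TwoSidedIdeal.mem_asIdeal]
  refine eq_bot_iff.mpr fun b hb => ?_
  obtain ⟨a, rfl⟩ := hπs b
  have ha : a ∈ J := by
    rw [← hJJ, TwoSidedIdeal.mem_jacobson_iff]
    intro y
    obtain ⟨z, hz⟩ := Ideal.mem_jacobson_iff.mp hb (π y)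
    obtain ⟨z', rfl⟩ := hπs z
    refine ⟨z', (hker _).mp ?_⟩
    rw [Submodule.mem_bot] at hz
    simpa only [map_add, map_sub, map_mul, map_one] using hz
  simpa using (hker a).mpr ha

end Aux

theorem stmt16 (K : Type*) [CommRing K] [IsLocalRing K]
    (A : Type*) [Ring A] [Algebra K A] [Module.Finite K A] :
    IsSemisimpleRing ((⊥ : TwoSidedIdeal A).jacobson.ringCon.Quotient) := by
  classical
  set J := (⊥ : TwoSidedIdeal A).jacobson with hJ
  let π : A →+* J.ringCon.Quotient := J.ringCon.mk'
  have hπs : Function.Surjective π := fun b => Quotient.inductionOn' b fun a => ⟨a, rfl⟩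
  have hker : ∀ x : A, π x = 0 ↔ x ∈ J := fun x => by
    rw [show (0 : J.ringCon.Quotient) = π 0 from (map_zero π).symm]
    rw [show (π x = π 0) ↔ J.ringCon x 0 from RingCon.eq _]
    rw [TwoSidedIdeal.rel_iff, sub_zero]
  -- Step A : the maximal ideal of `K` maps into `J`
  have hstepA : ∀ x ∈ IsLocalRing.maximalIdeal K, algebraMap K A x ∈ J := by
    intro x hx
    rw [← TwoSidedIdeal.mem_asIdeal, hJ, TwoSidedIdeal.asIdeal_jacobson]
    rw [Ideal.jacobson]
    rw [Submodule.mem_sInf]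
    rintro M ⟨-, hMmax⟩
    haveI := hMmax
    haveI : IsSimpleModule A (A ⧸ M) := isSimpleModule_iff_isCoatom.mpr hMmax.out
    set c := algebraMap K A x with hc
    let φ : (A ⧸ M) →ₗ[A] (A ⧸ M) :=
      { toFun := fun q => c • q
        map_add' := fun p q => smul_add c p q
        map_smul' := fun a q => by
          simp only [RingHom.id_apply]
          rw [smul_smul, smul_smul, Algebra.commutes] }
    rcases eq_bot_or_eq_top (LinearMap.range φ) with hr | hr
    · have h0 : φ = 0 := LinearMap.range_eq_bot.mp hr
      have h1 : (Submodule.Quotient.mk c : A ⧸ M) = 0 := by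
        have : φ (Submodule.Quotient.mk (1 : A)) = 0 := by rw [h0]; rfl
        rwa [show φ (Submodule.Quotient.mk (1 : A)) = Submodule.Quotient.mk c by
          show c • (Submodule.Quotient.mk (1 : A) : A ⧸ M) = _
          rw [← Submodule.Quotient.mk_smul, smul_eq_mul, mul_one]] at this
      exact (Submodule.Quotient.mk_eq_zero M).mp h1
    · exfalso
      haveI : Module.Finite K (A ⧸ M) :=
        Module.Finite.of_surjective (M.mkQ.restrictScalars K) (Submodule.mkQ_surjective M)
      have hle : (⊤ : Submodule K (A ⧸ M)) ≤ (IsLocalRing.maximalIdeal K) • ⊤ := by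
        intro q _
        obtain ⟨q', rfl⟩ := (LinearMap.range_eq_top.mp hr) q
        have h2 : φ q' = x • q' := by
          show c • q' = x • q'
          rw [hc, Algebra.algebraMap_eq_smul_one, smul_assoc, one_smul]
        rw [h2]
        exact Submodule.smul_mem_smul hx Submodule.mem_top
      have hbot := Submodule.eq_bot_of_le_smul_of_le_jacobson_bot
        (IsLocalRing.maximalIdeal K) ⊤ Module.Finite.fg_top hle
        (by rw [IsLocalRing.jacobson_eq_maximalIdeal ⊥ bot_ne_top])
      haveI := IsSimpleModule.nontrivial A (A ⧸ M)
      obtain ⟨p, q, hpq⟩ := exists_pair_ne (A ⧸ M)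
      have hz : ∀ r : A ⧸ M, r = 0 := fun r => by
        have hr : r ∈ (⊤ : Submodule K (A ⧸ M)) := Submodule.mem_top
        rw [hbot] at hr
        exact (Submodule.mem_bot K).mp hr
      exact hpq ((hz p).trans (hz q).symm)
  -- the `K`-submodule `m • A` and the quotient module `A ⧸ m•A`
  set m := IsLocalRing.maximalIdeal K with hm
  set N : Submodule K A := m • ⊤ with hN
  clear_value N
  haveI hmmax : m.IsMaximal := hm ▸ (IsLocalRing.maximalIdeal.isMaximal K)
  clear_value m
  haveI : Module.Finite K (A ⧸ N) :=
    Module.Finite.of_surjective N.mkQ (Submodule.mkQ_surjective N)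
  have htor : Module.IsTorsionBySet K (A ⧸ N) m := by
    intro q a
    obtain ⟨b, rfl⟩ := Submodule.mkQ_surjective N q
    show (a : K) • N.mkQ b = 0
    rw [← map_smul, Submodule.mkQ_apply, Submodule.Quotient.mk_eq_zero, hN]
    exact Submodule.smul_mem_smul a.2 Submodule.mem_top
  letI : Module (K ⧸ m) (A ⧸ N) := htor.module
  haveI : IsScalarTower K (K ⧸ m) (A ⧸ N) := htor.isScalarTower
  haveI : Module.Finite (K ⧸ m) (A ⧸ N) := Module.Finite.of_restrictScalars_finite K _ _
  haveI : IsArtinianRing (K ⧸ m) := by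
    letI := Ideal.Quotient.field m
    exact DivisionRing.instIsArtinianRing
  haveI hartk : IsArtinian (K ⧸ m) (A ⧸ N) := isArtinian_of_fg_of_artinian'
  -- `A ⧸ m•A` is artinian as a `K`-module
  haveI hartK : IsArtinian K (A ⧸ N) := by
    let tok : Submodule K (A ⧸ N) ↪o Submodule (K ⧸ m) (A ⧸ N) :=
      OrderEmbedding.ofMapLEIff (fun S =>
        ({ carrier := S
           add_mem' := fun ha hb => S.add_mem ha hb
           zero_mem' := S.zero_mem
           smul_mem' := by
             rintro c y hy
             obtain ⟨z, rfl⟩ := Ideal.Quotient.mk_surjective c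
             rw [htor.mk_smul]
             exact S.smul_mem z hy } : Submodule (K ⧸ m) (A ⧸ N)))
        (fun S S' => by
          constructor
          · intro h y hy
            exact h hy
          · intro h y hy
            exact h hy)
    exact tok.wellFoundedLT
  -- the quotient ring is artinian
  haveI hartB : IsArtinianRing J.ringCon.Quotient := by
    let F : Ideal J.ringCon.Quotient → Submodule K A := fun I =>
      { carrier := π ⁻¹' I
        add_mem' := fun {a b} ha hb => by
          show π (a + b) ∈ I
          rw [map_add]
          exact I.add_mem ha hb
        zero_mem' := by
          show π 0 ∈ I
          rw [map_zero]
          exact I.zero_mem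
        smul_mem' := fun c a ha => by
          show π (c • a) ∈ I
          rw [Algebra.smul_def, map_mul]
          exact I.smul_mem (π (algebraMap K A c)) ha }
    have hNF : ∀ I, N ≤ F I := fun I => by
      rw [hN]
      refine Submodule.smul_le.mpr ?_
      intro r hr n _
      show π (r • n) ∈ I
      rw [Algebra.smul_def, map_mul, (hker _).mpr (hstepA r hr), zero_mul]
      exact I.zero_mem
    have hFle : ∀ {I I'}, F I ≤ F I' → I ≤ I' := by
      intro I I' h b hb
      obtain ⟨a, rfl⟩ := hπs b
      exact h hb
    have hGF : ∀ I, Submodule.comap N.mkQ ((F I).map N.mkQ) = F I := fun I => by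
      rw [Submodule.comap_map_eq, Submodule.ker_mkQ, sup_eq_left.mpr (hNF I)]
    let G : Ideal J.ringCon.Quotient ↪o Submodule K (A ⧸ N) :=
      OrderEmbedding.ofMapLEIff (fun I => (F I).map N.mkQ) (by
        intro I I'
        constructor
        · intro h
          refine hFle ?_
          rw [← hGF I, ← hGF I']
          exact Submodule.comap_mono h
        · intro h
          exact Submodule.map_mono (fun a ha => h ha))
    exact G.wellFoundedLT
  exact semisimple_of_artinian_jacobson_bot (quot_jacobson_bot A)
end

section
/- Let G, H be groups with H perfect, d : H → G a homomorphism with ker d central in H, and g ∈ G. Then there is at most one automorphism φ of H satisfying d(φ(h)) = g·d(h)·g⁻¹ for all h ∈ H. -/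
theorem stmt19 {G H : Type*} [Group G] [Group H]
    (hperf : commutator H = ⊤) (d : H →* G)
    (hker : ∀ h : H, h ∈ d.ker → h ∈ Subgroup.center H) (g : G)
    (φ ψ : MulAut H)
    (hφ : ∀ h : H, d (φ h) = g * d h * g⁻¹)
    (hψ : ∀ h : H, d (ψ h) = g * d h * g⁻¹) :
    φ = ψ := by
  -- c h := φ h * (ψ h)⁻¹ lies in the center of H
  have hc : ∀ h : H, φ h * (ψ h)⁻¹ ∈ Subgroup.center H := by
    intro h
    apply hker
    simp only [MonoidHom.mem_ker, map_mul, map_inv, hφ h, hψ h]; group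
  -- c is a homomorphism
  have hmul : ∀ a b : H, φ (a * b) * (ψ (a * b))⁻¹
      = (φ a * (ψ a)⁻¹) * (φ b * (ψ b)⁻¹) := by
    intro a b
    have hb := (Subgroup.mem_center_iff.mp (hc b)) (ψ a)
    simp only [map_mul, mul_inv_rev]
    calc φ a * φ b * ((ψ b)⁻¹ * (ψ a)⁻¹)
        = φ a * (φ b * (ψ b)⁻¹) * (ψ a)⁻¹ := by group
      _ = φ a * ((ψ a)⁻¹ * (ψ a)) * (φ b * (ψ b)⁻¹) * (ψ a)⁻¹ := by group
      _ = φ a * (ψ a)⁻¹ * (ψ a * (φ b * (ψ b)⁻¹) * (ψ a)⁻¹) := by group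
      _ = φ a * (ψ a)⁻¹ * (φ b * (ψ b)⁻¹ * ψ a * (ψ a)⁻¹) := by rw [hb]
      _ = (φ a * (ψ a)⁻¹) * (φ b * (ψ b)⁻¹) := by group
  let c : H →* H := MonoidHom.mk' (fun h => φ h * (ψ h)⁻¹) hmul
  have hker' : commutator H ≤ c.ker := by
    rw [commutator, Subgroup.commutator_le]
    intro a _ b _
    have := (Subgroup.mem_center_iff.mp (hc a)) (φ b * (ψ b)⁻¹)
    simp only [MonoidHom.mem_ker, commutatorElement_def, map_mul, map_inv,
      MonoidHom.mk'_apply, c]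
    rw [← this]
    group
  rw [hperf] at hker'
  have hone : ∀ h : H, φ h = ψ h := by
    intro h
    have : c h = 1 := hker' (Subgroup.mem_top h)
    simpa [c, MonoidHom.mk'_apply, mul_inv_eq_one] using this
  ext h
  exact hone h
end
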